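/- Let H be a complex Hilbert space and C : H → H a bounded self-adjoint operator. Suppose φ' ∈ H is a unit vector with C φ' = 0, and there exists ω_C > 0 with Re ⟪C v, v⟫ ≥ ω_C ‖v‖² for every v orthogonal to φ'. Let s ∈ H satisfy ⟪φ', s⟫ ≠ 0. Then there exists c₊ > 0 such that Re ⟪C u, u⟫ ≥ c₊ ‖u‖² for every u ∈ H orthogonal to s. -/

import Mathlib

open scoped InnerProductSpace

/-- The classical constrained-coercivity estimate used in Theorem 2.7: if `C` is a
bounded self-adjoint operator with `C φ' = 0` for a unit vector `φ'` and
`Re ⟪C v, v⟫ ≥ ωC ‖v‖²` for all `v ⊥ φ'` (`ωC > 0`), and `s ∈ H` has `⟪φ', s⟫ ≠ 0`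
(paper convention: inner product linear in its first argument, i.e. `⟪s, φ'⟫_ℂ ≠ 0`
in Mathlib's convention), then there exists `c₊ > 0` with
`Re ⟪C u, u⟫ ≥ c₊ ‖u‖²` for every `u ⊥ s`. -/
theorem constrained_coercivity
    {H : Type*} [NormedAddCommGroup H] [InnerProductSpace ℂ H] [CompleteSpace H]
    (C : H →L[ℂ] H) (hC : IsSelfAdjoint C)
    (φ' : H) (hφ' : ‖φ'‖ = 1) (hCφ : C φ' = 0)
    (ωC : ℝ) (hωC : 0 < ωC)
    (hgap : ∀ v : H, ⟪φ', v⟫_ℂ = 0 → ωC * ‖v‖ ^ 2 ≤ (⟪v, C v⟫_ℂ).re)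
    (s : H) (hs : ⟪s, φ'⟫_ℂ ≠ 0) :
    ∃ cplus : ℝ, 0 < cplus ∧
      ∀ u : H, ⟪s, u⟫_ℂ = 0 → cplus * ‖u‖ ^ 2 ≤ (⟪u, C u⟫_ℂ).re := by
  have hsφ : (0:ℝ) < ‖⟪s, φ'⟫_ℂ‖ := norm_pos_iff.mpr hs
  set K : ℝ := ‖s‖ / ‖⟪s, φ'⟫_ℂ‖ with hKdef
  have hK0 : 0 ≤ K := div_nonneg (norm_nonneg _) hsφ.le
  refine ⟨ωC / (K ^ 2 + 1), by positivity, ?_⟩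
  intro u hu
  set a : ℂ := ⟪φ', u⟫_ℂ with ha
  set v : H := u - a • φ' with hvdef
  have huv : u = v + a • φ' := by rw [hvdef]; abel
  have hφφ : ⟪φ', φ'⟫_ℂ = 1 := by
    rw [@inner_self_eq_norm_sq_to_K ℂ, hφ']; norm_num
  have hφv : ⟪φ', v⟫_ℂ = 0 := by
    simp [hvdef, inner_sub_right, inner_smul_right, hφφ, ← ha, hφ']
  have hCu : C u = C v := by
    rw [huv, map_add, map_smul, hCφ, smul_zero, add_zero]
  have hφCv : ⟪φ', C v⟫_ℂ = 0 := by
    have hsym := (hC.isSymmetric) φ' v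
    simp only [ContinuousLinearMap.coe_coe] at hsym
    rw [← hsym, hCφ, inner_zero_left]
  have hsplit : ⟪u, C u⟫_ℂ = ⟪v, C v⟫_ℂ := by
    rw [hCu, huv, inner_add_left, inner_smul_left, hφCv, mul_zero, add_zero]
  -- constraint gives |a| ≤ K ‖v‖
  have hconstraint : a * ⟪s, φ'⟫_ℂ = - ⟪s, v⟫_ℂ := by
    have : ⟪s, u⟫_ℂ = ⟪s, v⟫_ℂ + a * ⟪s, φ'⟫_ℂ := by
      rw [huv, inner_add_right, inner_smul_right]
    rw [this] at hu; linear_combination hu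
  have hanorm : ‖a‖ * ‖⟪s, φ'⟫_ℂ‖ ≤ ‖s‖ * ‖v‖ := by
    have := norm_inner_le_norm (𝕜 := ℂ) s v
    calc ‖a‖ * ‖⟪s, φ'⟫_ℂ‖ = ‖a * ⟪s, φ'⟫_ℂ‖ := (norm_mul _ _).symm
      _ = ‖⟪s, v⟫_ℂ‖ := by rw [hconstraint, norm_neg]
      _ ≤ ‖s‖ * ‖v‖ := this
  have haK : ‖a‖ ≤ K * ‖v‖ := by
    rw [hKdef, div_mul_eq_mul_div, le_div_iff₀ hsφ]
    nlinarith [norm_nonneg v, norm_nonneg a]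
  -- Pythagoras
  have hpyth : ‖u‖ ^ 2 = ‖v‖ ^ 2 + ‖a‖ ^ 2 := by
    have horth : ⟪v, a • φ'⟫_ℂ = 0 := by
      rw [inner_smul_right]
      rw [← inner_conj_symm] at hφv ⊢
      simp [map_eq_zero] at hφv
      simp [hφv]
    have := norm_add_sq (𝕜 := ℂ) v (a • φ')
    rw [horth] at this
    simp only [map_zero, mul_zero, add_zero] at this
    rw [huv, this, norm_smul, hφ']
    ring
  have hnu : ‖u‖ ^ 2 ≤ (K ^ 2 + 1) * ‖v‖ ^ 2 := by
    have : ‖a‖ ^ 2 ≤ K ^ 2 * ‖v‖ ^ 2 := by nlinarith [norm_nonneg a, norm_nonneg v, mul_nonneg hK0 (norm_nonneg v)]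
    nlinarith
  have hgapv := hgap v hφv
  have hKpos : (0:ℝ) < K ^ 2 + 1 := by positivity
  rw [hsplit]
  calc ωC / (K ^ 2 + 1) * ‖u‖ ^ 2 ≤ ωC / (K ^ 2 + 1) * ((K ^ 2 + 1) * ‖v‖ ^ 2) := by
        apply mul_le_mul_of_nonneg_left hnu (by positivity)
    _ = ωC * ‖v‖ ^ 2 := by field_simp
    _ ≤ (⟪v, C v⟫_ℂ).re := hgapv
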